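/- Let A ↪ E be a subobject in an abelian category with stability function Z₀ admitting HN filtrations, and suppose E is Z₀-semistable. Write Z₀(A) = a + x where a ∈ ℂ has the same phase as Z₀(E) and x ≥ 0 is real. Then the mass satisfies m^{Z₀}(A) ≤ |a| + x. -/

import Mathlib

open CategoryTheory

lemma keyEstimate {θ : ℝ} (hs : 0 < Real.sin θ) (hθπ : θ ≤ Real.pi)
    {z : ℂ} (hz : z ≠ 0) (him : 0 ≤ z.im) (harg : z.arg ≤ θ) :
    0 ≤ z.re - z.im * Real.cos θ / Real.sin θ ∧
    ‖z‖ ≤ z.im / Real.sin θ + (z.re - z.im * Real.cos θ / Real.sin θ) := by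
  set α := z.arg with hα
  have hα0 : 0 ≤ α := Complex.arg_nonneg_iff.mpr him
  have hre : ‖z‖ * Real.cos α = z.re := Complex.norm_mul_cos_arg z
  have him' : ‖z‖ * Real.sin α = z.im := Complex.norm_mul_sin_arg z
  have habs : 0 < ‖z‖ := norm_pos_iff.mpr hz
  have hsin1 : 0 ≤ Real.sin α := Real.sin_nonneg_of_nonneg_of_le_pi hα0 (harg.trans hθπ)
  have hsin2 : 0 ≤ Real.sin (θ - α) :=
    Real.sin_nonneg_of_nonneg_of_le_pi (by linarith) (by linarith)
  have hsub : Real.sin (θ - α) = Real.sin θ * Real.cos α - Real.cos θ * Real.sin α :=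
    Real.sin_sub θ α
  have hcos1 : Real.cos (θ - α) ≤ 1 := Real.cos_le_one _
  have hcosα : Real.cos α ≤ 1 := Real.cos_le_one _
  have hadd : Real.sin θ = Real.sin (θ - α) * Real.cos α + Real.cos (θ - α) * Real.sin α := by
    rw [← Real.sin_add]; ring_nf
  have h1 : 0 ≤ Real.sin θ * z.re - Real.cos θ * z.im := by
    calc (0:ℝ) ≤ ‖z‖ * Real.sin (θ - α) := mul_nonneg habs.le hsin2
      _ = Real.sin θ * (‖z‖ * Real.cos α)
            - Real.cos θ * (‖z‖ * Real.sin α) := by rw [hsub]; ring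
      _ = Real.sin θ * z.re - Real.cos θ * z.im := by rw [hre, him']
  have hv : 0 ≤ z.re - z.im * Real.cos θ / Real.sin θ := by
    have : z.im * Real.cos θ / Real.sin θ ≤ z.re := by
      rw [div_le_iff₀ hs]; nlinarith
    linarith
  refine ⟨hv, ?_⟩
  have hkey : Real.sin θ ≤ Real.sin α + Real.sin (θ - α) := by nlinarith
  have this2 : ‖z‖ * Real.sin θ ≤ z.im + (Real.sin θ * z.re - Real.cos θ * z.im) := by
    calc ‖z‖ * Real.sin θ
        ≤ ‖z‖ * (Real.sin α + Real.sin (θ - α)) :=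
          mul_le_mul_of_nonneg_left hkey habs.le
      _ = ‖z‖ * Real.sin α + (Real.sin θ * (‖z‖ * Real.cos α)
            - Real.cos θ * (‖z‖ * Real.sin α)) := by rw [hsub]; ring
      _ = z.im + (Real.sin θ * z.re - Real.cos θ * z.im) := by rw [hre, him']
  rw [← mul_le_mul_iff_of_pos_right hs]
  calc ‖z‖ * Real.sin θ ≤ z.im + (Real.sin θ * z.re - Real.cos θ * z.im) := this2
    _ = (z.im / Real.sin θ + (z.re - z.im * Real.cos θ / Real.sin θ)) * Real.sin θ := by
        field_simp


/-- Let `A ↪ E` be a subobject in an abelian category with stability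
function `Z₀` (additive on short exact sequences, valued in the semi-closed upper half
plane on nonzero objects) admitting HN filtrations, and suppose `E` is `Z₀`-semistable
(every nonzero subobject has phase, i.e. `arg` of its charge, at most that of `E`).  Write
`Z₀(A) = a + x` where `a ∈ ℂ` has the same phase as `Z₀(E)` (i.e. `a = r·e^{i·arg Z₀(E)}`
with `r ≥ 0`) and `x ≥ 0` is real.  Then the mass of `A`, computed from any HN filtration
`0 = X₀ ↪ … ↪ X_n = A` with semistable factors `G_i` of strictly decreasing phases as
`m^{Z₀}(A) = ∑ᵢ |Z₀(G_i)|`, satisfies `m^{Z₀}(A) ≤ |a| + x`. -/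
theorem stmt15 {C : Type*} [Category C] [Abelian C]
    (Z : C → ℂ)
    (hZadd : ∀ S : ShortComplex C, S.ShortExact → Z S.X₂ = Z S.X₁ + Z S.X₃)
    (hstab : ∀ F : C, ¬ Limits.IsZero F →
      0 < (Z F).im ∨ ((Z F).im = 0 ∧ (Z F).re < 0))
    (E : C) (hE : ¬ Limits.IsZero E)
    (hEss : ∀ (B : C) (g : B ⟶ E), Mono g → ¬ Limits.IsZero B → (Z B).arg ≤ (Z E).arg)
    (A : C) (ιA : A ⟶ E) (hιA : Mono ιA)
    (n : ℕ) (X : Fin (n + 1) → C) (f : ∀ i : Fin n, X i.castSucc ⟶ X i.succ)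
    (G : Fin n → C)
    (hX0 : Limits.IsZero (X 0)) (hXn : X (Fin.last n) = A)
    (hmono : ∀ i, Mono (f i))
    (hses : ∀ i : Fin n, ∃ (g : X i.succ ⟶ G i) (w : f i ≫ g = 0),
      (ShortComplex.mk (f i) g w).ShortExact)
    (hG0 : ∀ i, ¬ Limits.IsZero (G i))
    (hGss : ∀ (i : Fin n) (B : C) (g : B ⟶ G i), Mono g → ¬ Limits.IsZero B →
      (Z B).arg ≤ (Z (G i)).arg)
    (hdec : ∀ i j : Fin n, i < j → (Z (G j)).arg < (Z (G i)).arg)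
    (a : ℂ) (r x : ℝ) (hr : 0 ≤ r) (hx : 0 ≤ x)
    (ha : a = ((r : ℝ) : ℂ) * Complex.exp ((((Z E).arg : ℝ) : ℂ) * Complex.I))
    (hZA : Z A = a + ((x : ℝ) : ℂ)) :
    ∑ i, ‖Z (G i)‖ ≤ ‖a‖ + x := by
  haveI := hιA
  -- Z of a zero object is 0
  have hZzero : ∀ F : C, Limits.IsZero F → Z F = 0 := by
    intro F hF
    have w : 𝟙 F ≫ 𝟙 F = 0 := by rw [Category.comp_id]; exact hF.eq_of_src _ _
    have hse : (ShortComplex.mk (𝟙 F) (𝟙 F) w).ShortExact :=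
      { exact := ShortComplex.exact_of_isZero_X₂ _ hF }
    have h := hZadd _ hse
    exact (left_eq_add.mp h)
  have hstep : ∀ i : Fin n, Z (X i.succ) = Z (X i.castSucc) + Z (G i) := by
    intro i; obtain ⟨g, w, hse⟩ := hses i; exact hZadd _ hse
  -- partial charges
  have hsum : ∀ m : ℕ, ∀ hm : m ≤ n,
      Z (X ⟨m, Nat.lt_succ_of_le hm⟩) = ∑ i : Fin m, Z (G (Fin.castLE hm i)) := by
    intro m
    induction m with
    | zero =>
      intro hm
      have h0 : (⟨0, Nat.lt_succ_of_le hm⟩ : Fin (n+1)) = 0 := by ext; simp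
      rw [h0, hZzero _ hX0]
      simp
    | succ m ih =>
      intro hm
      have hm' : m < n := hm
      have hmn : m ≤ n := le_of_lt hm'
      rw [show (⟨m+1, Nat.lt_succ_of_le hm⟩ : Fin (n+1)) = (⟨m, hm'⟩ : Fin n).succ from rfl,
        hstep ⟨m, hm'⟩,
        show (⟨m, hm'⟩ : Fin n).castSucc = (⟨m, Nat.lt_succ_of_le hmn⟩ : Fin (n+1)) from rfl,
        ih hmn, Fin.sum_univ_castSucc]
      rfl
  have hA : Z A = ∑ i : Fin n, Z (G i) := by
    have h := hsum n le_rfl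
    rw [show (⟨n, Nat.lt_succ_of_le le_rfl⟩ : Fin (n+1)) = Fin.last n from rfl, hXn] at h
    simpa using h
  -- mono chain to E
  have hchain : ∀ d m : ℕ, ∀ h : m + d = n, ∃ g : X ⟨m, by omega⟩ ⟶ E, Mono g := by
    intro d
    induction d with
    | zero =>
      intro m h
      have he : X ⟨m, by omega⟩ = A := by
        rw [show (⟨m, by omega⟩ : Fin (n+1)) = Fin.last n from Fin.ext (by simp only [Fin.val_last]; omega), hXn]
      exact ⟨eqToHom he ≫ ιA, mono_comp _ _⟩
    | succ d ih =>
      intro m h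
      obtain ⟨g, hg⟩ := ih (m+1) (by omega)
      haveI := hg
      have hmn : m < n := by omega
      haveI := hmono ⟨m, hmn⟩
      exact ⟨f ⟨m, hmn⟩ ≫ g, mono_comp _ _⟩
  -- basic facts about the factors
  have hnz : ∀ i : Fin n, Z (G i) ≠ 0 := by
    intro i hc
    rcases hstab _ (hG0 i) with h | ⟨_, h⟩ <;> rw [hc] at h <;> simp at h
  have himG : ∀ i : Fin n, 0 ≤ (Z (G i)).im := by
    intro i
    rcases hstab _ (hG0 i) with h | ⟨h, _⟩
    · exact le_of_lt h
    · exact le_of_eq h.symm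
  set θ := (Z E).arg with hθdef
  have hargG : ∀ i : Fin n, (Z (G i)).arg ≤ θ := by
    intro i
    have hn : 0 < n := i.pos
    set i0 : Fin n := ⟨0, hn⟩ with hi0
    have h1 : Z (X i0.succ) = Z (G i0) := by
      rw [hstep i0, show i0.castSucc = (0 : Fin (n+1)) from by ext; simp [hi0], hZzero _ hX0,
        zero_add]
    have hX1nz : ¬ Limits.IsZero (X i0.succ) := fun hz => hnz i0 (by rw [← h1, hZzero _ hz])
    obtain ⟨g, hg⟩ := hchain (n-1) 1 (by omega)
    have harg0 : (Z (G i0)).arg ≤ θ := by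
      rw [← h1]
      exact hEss _ g hg hX1nz
    rcases Nat.eq_zero_or_pos i.val with h0 | hpos
    · rw [show i = i0 from Fin.ext h0]; exact harg0
    · exact le_of_lt ((hdec i0 i (by rwa [Fin.lt_def])).trans_le harg0)
  -- charge of A
  have hsumz : ∑ i : Fin n, Z (G i) = a + ((x : ℝ) : ℂ) := by rw [← hA, hZA]
  have hare : a.re = r * Real.cos θ := by
    rw [ha]; simp [Complex.mul_re, Complex.exp_ofReal_mul_I_re, Complex.exp_ofReal_mul_I_im]
  have haim : a.im = r * Real.sin θ := by
    rw [ha]; simp [Complex.mul_im, Complex.exp_ofReal_mul_I_re, Complex.exp_ofReal_mul_I_im]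
  have hImSum : ∑ i : Fin n, (Z (G i)).im = r * Real.sin θ := by
    have h := congrArg Complex.im hsumz
    rw [Complex.im_sum] at h
    simpa [haim] using h
  have hReSum : ∑ i : Fin n, (Z (G i)).re = r * Real.cos θ + x := by
    have h := congrArg Complex.re hsumz
    rw [Complex.re_sum] at h
    simpa [hare] using h
  have habsa : ‖a‖ = r := by
    rw [ha, norm_mul, Complex.norm_exp_ofReal_mul_I, Complex.norm_real, Real.norm_eq_abs, abs_of_nonneg hr,
      mul_one]
  rcases hstab E hE with hEim | ⟨hEim, hEre⟩
  · -- 0 < Im Z(E) : genuine convexity case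
    have hZEnz : Z E ≠ 0 := by
      intro hc; rw [hc] at hEim; simp at hEim
    have hsinθ : 0 < Real.sin θ := by
      rw [hθdef, Complex.sin_arg]
      exact div_pos hEim (norm_pos_iff.mpr hZEnz)
    have hθπ : θ ≤ Real.pi := Complex.arg_le_pi _
    have key := fun i : Fin n => keyEstimate hsinθ hθπ (hnz i) (himG i) (hargG i)
    calc ∑ i : Fin n, ‖Z (G i)‖
        ≤ ∑ i : Fin n, ((Z (G i)).im / Real.sin θ
            + ((Z (G i)).re - (Z (G i)).im * Real.cos θ / Real.sin θ)) :=
          Finset.sum_le_sum fun i _ => (key i).2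
      _ = (∑ i : Fin n, (Z (G i)).im) / Real.sin θ
            + ((∑ i : Fin n, (Z (G i)).re)
              - (∑ i : Fin n, (Z (G i)).im) * Real.cos θ / Real.sin θ) := by
          rw [Finset.sum_add_distrib, Finset.sum_sub_distrib, ← Finset.sum_div,
            ← Finset.sum_div, ← Finset.sum_mul]
      _ = r + x := by
          rw [hImSum, hReSum]
          field_simp
          ring
      _ = ‖a‖ + x := by rw [habsa]
  · -- Im Z(E) = 0, Re Z(E) < 0 : everything is negative real
    have hθ : θ = Real.pi := Complex.arg_eq_pi_iff.mpr ⟨hEre, hEim⟩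
    have hImSum' : ∑ i : Fin n, (Z (G i)).im = 0 := by
      rw [hImSum, hθ, Real.sin_pi, mul_zero]
    have him0 : ∀ i : Fin n, (Z (G i)).im = 0 := by
      intro i
      exact (Finset.sum_eq_zero_iff_of_nonneg fun j _ => himG j).mp hImSum' i
        (Finset.mem_univ i)
    have hre0 : ∀ i : Fin n, (Z (G i)).re < 0 := by
      intro i
      rcases hstab _ (hG0 i) with h | ⟨_, h⟩
      · exact absurd (him0 i) (ne_of_gt h)
      · exact h
    have habs_eq : ∀ i : Fin n, ‖Z (G i)‖ = -(Z (G i)).re := by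
      intro i
      have hzi : Z (G i) = (((Z (G i)).re : ℝ) : ℂ) := Complex.ext rfl (by simp [him0 i])
      rw [hzi, Complex.norm_real, Real.norm_eq_abs, abs_of_neg]
      · simp
      · simpa using hre0 i
    calc ∑ i : Fin n, ‖Z (G i)‖
        = ∑ i : Fin n, -(Z (G i)).re := Finset.sum_congr rfl fun i _ => habs_eq i
      _ = -(r * Real.cos θ + x) := by rw [Finset.sum_neg_distrib, hReSum]
      _ = r - x := by rw [hθ, Real.cos_pi]; ring
      _ ≤ r + x := by linarith
      _ = ‖a‖ + x := by rw [habsa]
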